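/- Let H be a real Banach space and S ⊆ H a closed linear subspace (a Submodule that is closed). Let u : ℝ → H be continuous with compact support. If the moment ∫_ℝ tᵏ • u(t) dt (a Bochner integral) belongs to S for every k ∈ ℕ, then u(t) ∈ S for every t ∈ ℝ. -/

import Mathlib

open MeasureTheory

/-- Scalar case: a continuous compactly supported real function with vanishing
moments is identically zero. -/
lemma moments_scalar_zero (f : ℝ → ℝ) (hf : Continuous f) (hsupp : HasCompactSupport f)
    (h : ∀ k : ℕ, (∫ t : ℝ, t ^ k * f t) = 0) : ∀ t : ℝ, f t = 0 := by
  have hfi : Integrable f := hf.integrable_of_hasCompactSupport hsupp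
  have hint : ∀ k : ℕ, Integrable (fun t : ℝ => t ^ k * f t) := fun k =>
    ((continuous_pow k).mul hf).integrable_of_hasCompactSupport hsupp.mul_left
  have hff : Integrable (fun t : ℝ => f t * f t) :=
    (hf.mul hf).integrable_of_hasCompactSupport hsupp.mul_left
  -- all polynomial moments vanish
  have hpoly : ∀ p : Polynomial ℝ, (∫ t : ℝ, p.eval t * f t) = 0 := by
    intro p
    have heq : ∀ t : ℝ, p.eval t * f t
        = ∑ i ∈ Finset.range (p.natDegree + 1), p.coeff i * (t ^ i * f t) := by
      intro t
      rw [Polynomial.eval_eq_sum_range, Finset.sum_mul]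
      exact Finset.sum_congr rfl fun i _ => mul_assoc _ _ _
    simp_rw [heq]
    rw [integral_finset_sum _ (fun i _ => (hint i).const_mul _)]
    refine Finset.sum_eq_zero fun i _ => ?_
    rw [integral_const_mul, h i, mul_zero]
  -- support inside an interval
  obtain ⟨R, hR⟩ : ∃ R : ℝ, tsupport f ⊆ Set.Icc (-R) R := by
    obtain ⟨r, hr⟩ := (Metric.isBounded_iff_subset_closedBall (0 : ℝ)).mp hsupp.isBounded
    refine ⟨r, hr.trans ?_⟩
    rw [Real.closedBall_eq_Icc]
    simp
  -- ∫ f² = 0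
  have habs : Integrable (fun t : ℝ => |f t|) := hfi.abs
  set C : ℝ := ∫ t : ℝ, |f t| with hCdef
  have hC : 0 ≤ C := integral_nonneg fun t => abs_nonneg _
  have key : ∀ ε : ℝ, 0 < ε → |∫ t : ℝ, f t * f t| ≤ ε * C := by
    intro ε hε
    obtain ⟨p, hp⟩ := exists_polynomial_near_of_continuousOn (-R) R f hf.continuousOn ε hε
    have hI : (∫ t : ℝ, f t * f t) = ∫ t : ℝ, (f t - p.eval t) * f t := by
      have : (fun t : ℝ => (f t - p.eval t) * f t)
          = fun t : ℝ => f t * f t - p.eval t * f t := by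
        funext t; ring
      rw [this, integral_sub hff
        ((p.continuous.mul hf).integrable_of_hasCompactSupport hsupp.mul_left :
          Integrable (fun t : ℝ => p.eval t * f t)),
        hpoly p, sub_zero]
    have bound : ∀ t : ℝ, ‖(f t - p.eval t) * f t‖ ≤ ε * |f t| := by
      intro t
      by_cases ht : t ∈ Set.Icc (-R) R
      · rw [Real.norm_eq_abs, abs_mul]
        exact mul_le_mul_of_nonneg_right
          (by rw [abs_sub_comm]; exact (hp t ht).le) (abs_nonneg _)
      · have hft : f t = 0 := image_eq_zero_of_notMem_tsupport fun hmem => ht (hR hmem)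
        simp [hft]
    calc |∫ t : ℝ, f t * f t| = ‖∫ t : ℝ, (f t - p.eval t) * f t‖ := by
          rw [hI, Real.norm_eq_abs]
      _ ≤ ∫ t : ℝ, ε * |f t| :=
          norm_integral_le_of_norm_le (habs.const_mul ε) (.of_forall bound)
      _ = ε * C := by rw [integral_const_mul]
  have hI0 : (∫ t : ℝ, f t * f t) = 0 := by
    by_contra hne
    have hpos : 0 < |∫ t : ℝ, f t * f t| := abs_pos.mpr hne
    have hd : (0:ℝ) < 2 * (C + 1) := by positivity
    have := key (|∫ t : ℝ, f t * f t| / (2 * (C + 1))) (by positivity)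
    rw [div_mul_eq_mul_div, le_div_iff₀ hd] at this
    nlinarith [mul_nonneg hpos.le hC]
  have hae : (fun t : ℝ => f t * f t) =ᵐ[volume] 0 :=
    (integral_eq_zero_iff_of_nonneg (fun t => mul_self_nonneg (f t)) hff).mp hI0
  have hall : (fun t : ℝ => f t * f t) = 0 :=
    (Continuous.ae_eq_iff_eq volume (hf.mul hf) continuous_const).mp hae
  intro t
  have := congrFun hall t
  simpa [mul_self_eq_zero] using this

/-- Vector case: a continuous compactly supported function into a real Banach
space with vanishing moments is identically zero. -/
lemma moments_vector_zero {E : Type*} [NormedAddCommGroup E] [NormedSpace ℝ E]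
    [CompleteSpace E] (v : ℝ → E) (hv : Continuous v) (hsupp : HasCompactSupport v)
    (h : ∀ k : ℕ, (∫ t : ℝ, t ^ k • v t) = 0) : ∀ t : ℝ, v t = 0 := by
  intro t
  by_contra hne
  obtain ⟨φ, hφ⟩ := SeparatingDual.exists_ne_zero (R := ℝ) hne
  have hint : ∀ k : ℕ, Integrable (fun t : ℝ => t ^ k • v t) := fun k =>
    ((continuous_pow k).smul hv).integrable_of_hasCompactSupport hsupp.smul_left
  have hmom : ∀ k : ℕ, (∫ s : ℝ, s ^ k * φ (v s)) = 0 := by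
    intro k
    have : (fun s : ℝ => s ^ k * φ (v s)) = fun s : ℝ => φ (s ^ k • v s) := by
      funext s; rw [φ.map_smul, smul_eq_mul]
    rw [this, ContinuousLinearMap.integral_comp_comm φ (hint k), h k, map_zero]
  have hcomp : HasCompactSupport fun s : ℝ => φ (v s) :=
    hsupp.comp_left (map_zero φ)
  have := moments_scalar_zero (fun s => φ (v s)) (φ.continuous.comp hv) hcomp hmom t
  exact hφ this

/-- If `u : ℝ → H` is continuous with compact support, with values in a real
Banach space `H`, `S` is a closed linear subspace of `H`, and every moment
`∫ t, tᵏ • u(t) dt` lies in `S`, then `u(t) ∈ S` for every `t ∈ ℝ`. -/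
theorem moments_in_closed_subspace
    (H : Type*) [NormedAddCommGroup H] [NormedSpace ℝ H] [CompleteSpace H]
    (S : Submodule ℝ H) (hS : IsClosed (S : Set H))
    (u : ℝ → H) (hu : Continuous u) (hsupp : HasCompactSupport u)
    (h : ∀ k : ℕ, (∫ t : ℝ, t ^ k • u t) ∈ S) :
    ∀ t : ℝ, u t ∈ S := by
  haveI : IsClosed (S : Set H) := hS
  -- the continuous linear projection onto the quotient
  let π : H →L[ℝ] H ⧸ S :=
    S.mkQ.mkContinuous 1 fun x => by
      simpa using Submodule.Quotient.norm_mk_le S x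
  have hπ : ∀ x : H, π x = Submodule.Quotient.mk x := fun x => rfl
  set v : ℝ → H ⧸ S := fun t => π (u t) with hv
  have hvc : Continuous v := π.continuous.comp hu
  have hvs : HasCompactSupport v := hsupp.comp_left (map_zero π)
  have hint : ∀ k : ℕ, Integrable (fun t : ℝ => t ^ k • u t) := fun k =>
    ((continuous_pow k).smul hu).integrable_of_hasCompactSupport hsupp.smul_left
  have hmom : ∀ k : ℕ, (∫ t : ℝ, t ^ k • v t) = 0 := by
    intro k
    have : (fun t : ℝ => t ^ k • v t) = fun t : ℝ => π (t ^ k • u t) := by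
      funext t; rw [π.map_smul]
    rw [this, ContinuousLinearMap.integral_comp_comm π (hint k), hπ,
      Submodule.Quotient.mk_eq_zero]
    exact h k
  intro t
  have := moments_vector_zero v hvc hvs hmom t
  rw [hv] at this
  rw [← Submodule.Quotient.mk_eq_zero]
  exact this
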